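/- arXiv:1706.06028 — 2 statements merged into one kernel-verified Lean document; each statement's English description precedes it below -/
import Mathlib

section
/- With the same setup as the K-means relaxation, the K-means objective satisfies ∑_{k=1}^{K} ∑_{i ∈ C_k} ‖x_i - (1/|C_k|) ∑_{j ∈ C_k} x_j‖² = tr(D) - tr(D Q), where D = XᵀX is the Gram matrix and Q = YᵀY is the normalized cluster co-association matrix. -/
open Matrix BigOperators

lemma cluster_sum {d n : ℕ} (x : Fin n → EuclideanSpace ℝ (Fin d))
    (s : Finset (Fin n)) (hs : s.Nonempty) :
    ∑ i ∈ s, ‖x i - (s.card : ℝ)⁻¹ • ∑ j ∈ s, x j‖^2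
      = ∑ i ∈ s, (inner ℝ (x i) (x i) : ℝ)
        - (s.card : ℝ)⁻¹ * ∑ i ∈ s, ∑ j ∈ s, (inner ℝ (x i) (x j) : ℝ) := by
  set m : EuclideanSpace ℝ (Fin d) := ∑ j ∈ s, x j with hm
  have hc : (0:ℝ) < s.card := by exact_mod_cast Finset.card_pos.mpr hs
  have hsum : ∑ i ∈ s, (inner ℝ (x i) m : ℝ)
      = ∑ i ∈ s, ∑ j ∈ s, (inner ℝ (x i) (x j) : ℝ) := by
    refine Finset.sum_congr rfl fun i _ => ?_
    rw [hm, inner_sum]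
  have hmm : (inner ℝ m m : ℝ) = ∑ i ∈ s, ∑ j ∈ s, (inner ℝ (x i) (x j) : ℝ) := by
    rw [hm, sum_inner]
    exact Finset.sum_congr rfl fun i _ => by rw [inner_sum]
  have hexp : ∀ i ∈ s, ‖x i - (s.card:ℝ)⁻¹ • m‖^2
      = (inner ℝ (x i) (x i) : ℝ) - 2 * ((s.card:ℝ)⁻¹ * inner ℝ (x i) m)
        + (s.card:ℝ)⁻¹ * ((s.card:ℝ)⁻¹ * inner ℝ m m) := by
    intro i _
    rw [← real_inner_self_eq_norm_sq]
    simp only [inner_sub_left, inner_sub_right, real_inner_smul_left,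
      real_inner_smul_right, real_inner_comm m (x i)]
    ring
  rw [Finset.sum_congr rfl hexp]
  rw [Finset.sum_add_distrib, Finset.sum_sub_distrib, Finset.sum_const, nsmul_eq_mul]
  simp only [← Finset.mul_sum]
  rw [hsum, hmm]
  field_simp
  ring

theorem stmt2 (n K d : ℕ) (x : Fin n → EuclideanSpace ℝ (Fin d))
    (C : Fin K → Finset (Fin n))
    (hne : ∀ k, (C k).Nonempty)
    (hdisj : ∀ k l, k ≠ l → Disjoint (C k) (C l))
    (hcover : ∀ i, ∃ k, i ∈ C k)
    (Y : Matrix (Fin K) (Fin n) ℝ)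
    (hY : ∀ k i, Y k i = if i ∈ C k then (Real.sqrt (C k).card)⁻¹ else 0)
    (D : Matrix (Fin n) (Fin n) ℝ)
    (hD : ∀ i j, D i j = inner ℝ (x i) (x j)) :
    ∑ k, ∑ i ∈ C k, ‖x i - ((C k).card : ℝ)⁻¹ • ∑ j ∈ C k, x j‖^2
      = D.trace - (D * (Yᵀ * Y)).trace := by
  have hc : ∀ k, (0:ℝ) < (C k).card := fun k => by
    exact_mod_cast Finset.card_pos.mpr (hne k)
  have hpart : ∀ g : Fin n → ℝ, ∑ i, g i = ∑ k, ∑ i ∈ C k, g i := by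
    intro g
    have huniv : Finset.univ.biUnion C = Finset.univ := by
      ext i; simpa using hcover i
    rw [← huniv, Finset.sum_biUnion]
    intro a _ b _ hab
    exact hdisj a b hab
  -- linear functional identity for Y
  have h1 : ∀ (k : Fin K) (f : Fin n → ℝ),
      ∑ i, Y k i * f i = (Real.sqrt (C k).card)⁻¹ * ∑ i ∈ C k, f i := by
    intro k f
    calc ∑ i, Y k i * f i
        = ∑ i, (if i ∈ C k then (Real.sqrt (C k).card)⁻¹ * f i else 0) := by
          refine Finset.sum_congr rfl fun i _ => ?_
          rw [hY]; split <;> simp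
      _ = ∑ i ∈ Finset.univ ∩ C k, (Real.sqrt (C k).card)⁻¹ * f i :=
          Finset.sum_ite_mem _ _ _
      _ = (Real.sqrt (C k).card)⁻¹ * ∑ i ∈ C k, f i := by
          rw [Finset.univ_inter, Finset.mul_sum]
  have hr : ∀ k : Fin K,
      (Real.sqrt (C k).card)⁻¹ * (Real.sqrt (C k).card)⁻¹ = ((C k).card : ℝ)⁻¹ := by
    intro k
    rw [← mul_inv, Real.mul_self_sqrt (le_of_lt (hc k))]
  have hD1 : D.trace = ∑ k, ∑ i ∈ C k, (inner ℝ (x i) (x i) : ℝ) := by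
    rw [Matrix.trace, hpart fun i => D.diag i]
    exact Finset.sum_congr rfl fun k _ => Finset.sum_congr rfl fun i _ => hD i i
  have hQ : (D * (Yᵀ * Y)).trace
      = ∑ k, ((C k).card : ℝ)⁻¹ * ∑ i ∈ C k, ∑ j ∈ C k, (inner ℝ (x i) (x j) : ℝ) := by
    calc (D * (Yᵀ * Y)).trace
        = ∑ i, ∑ j, ∑ k, Y k i * (Y k j * D i j) := by
          simp only [Matrix.trace, Matrix.diag, Matrix.mul_apply, Matrix.transpose_apply,
            Finset.mul_sum]
          refine Finset.sum_congr rfl fun i _ => Finset.sum_congr rfl fun j _ =>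
            Finset.sum_congr rfl fun k _ => by ring
      _ = ∑ k, ∑ i, ∑ j, Y k i * (Y k j * D i j) := by
          conv_lhs => rw [show (fun i => ∑ j, ∑ k, Y k i * (Y k j * D i j)) = (fun i => ∑ k, ∑ j, Y k i * (Y k j * D i j)) from funext fun i => Finset.sum_comm]
          exact Finset.sum_comm
      _ = ∑ k, ((C k).card : ℝ)⁻¹ * ∑ i ∈ C k, ∑ j ∈ C k, (inner ℝ (x i) (x j) : ℝ) := by
          refine Finset.sum_congr rfl fun k _ => ?_
          have : ∀ i, ∑ j, Y k j * D i j
              = (Real.sqrt (C k).card)⁻¹ * ∑ j ∈ C k, D i j := fun i => h1 k _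
          calc ∑ i, ∑ j, Y k i * (Y k j * D i j)
              = ∑ i, Y k i * ((Real.sqrt (C k).card)⁻¹ * ∑ j ∈ C k, D i j) := by
                refine Finset.sum_congr rfl fun i _ => ?_
                rw [← this i, Finset.mul_sum]
            _ = (Real.sqrt (C k).card)⁻¹ *
                  ∑ i ∈ C k, (Real.sqrt (C k).card)⁻¹ * ∑ j ∈ C k, D i j := h1 k _
            _ = ((C k).card : ℝ)⁻¹ * ∑ i ∈ C k, ∑ j ∈ C k, (inner ℝ (x i) (x j) : ℝ) := by
                rw [← Finset.mul_sum, ← mul_assoc, hr k]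
                congr 1
                exact Finset.sum_congr rfl fun i _ => Finset.sum_congr rfl fun j _ => hD i j
  rw [hD1, hQ, ← Finset.sum_sub_distrib]
  exact Finset.sum_congr rfl fun k _ => cluster_sum x (C k) (hne k)
end

section
/- Every real symmetric entrywise nonnegative matrix A that is diagonally dominant (i.e., A_{ii} ≥ ∑_{j ≠ i} A_{ij} for all i) is completely positive: there exists an entrywise nonnegative matrix B with A = BᵀB. -/
open Matrix BigOperators

theorem stmt3 (n : ℕ) (A : Matrix (Fin n) (Fin n) ℝ)
    (hsymm : A.IsSymm) (hnn : ∀ i j, 0 ≤ A i j)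
    (hdd : ∀ i, ∑ j ∈ Finset.univ.erase i, A i j ≤ A i i) :
    ∃ (m : ℕ) (B : Matrix (Fin m) (Fin n) ℝ), (∀ i j, 0 ≤ B i j) ∧ A = Bᵀ * B := by
  classical
  set d : Fin n → ℝ := fun i => A i i - ∑ j ∈ Finset.univ.erase i, A i j with hd_def
  have hd : ∀ i, 0 ≤ d i := fun i => sub_nonneg.2 (hdd i)
  have hsym' : ∀ i j, A j i = A i j := fun i j => by
    have := congrFun (congrFun hsymm i) j; simpa [Matrix.transpose_apply] using this
  set C : Matrix ((Fin n × Fin n) ⊕ Fin n) (Fin n) ℝ := fun k p =>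
    match k with
    | Sum.inl (i, j) => if i = j then 0 else
        Real.sqrt (A i j / 2) * ((if p = i then 1 else 0) + (if p = j then 1 else 0))
    | Sum.inr i => if p = i then Real.sqrt (d i) else 0 with hC_def
  have hCnn : ∀ k p, 0 ≤ C k p := by
    rintro (⟨i, j⟩ | i) p
    · by_cases h : i = j <;> simp [hC_def, h] <;> positivity
    · by_cases h : p = i <;> simp [hC_def, h, Real.sqrt_nonneg]
  -- generic delta-sum helpers
  have key2 : ∀ (F : Matrix (Fin n) (Fin n) ℝ) (a b : Fin n),
      ∑ i : Fin n, ∑ j : Fin n,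
        F i j * ((if a = i then (1:ℝ) else 0) * (if b = j then 1 else 0)) = F a b := by
    intro F a b
    simp [mul_ite, mul_one, mul_zero, Finset.sum_ite_eq]
  have key3 : ∀ (F : Matrix (Fin n) (Fin n) ℝ) (a b : Fin n),
      ∑ i : Fin n, ∑ j : Fin n,
        F i j * ((if a = j then (1:ℝ) else 0) * (if b = i then 1 else 0)) = F b a := by
    intro F a b
    simp [mul_ite, mul_one, mul_zero, Finset.sum_ite_eq]
  have key1 : ∀ (F : Matrix (Fin n) (Fin n) ℝ) (a b : Fin n),
      ∑ i : Fin n, ∑ j : Fin n,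
        F i j * ((if a = i then (1:ℝ) else 0) * (if b = i then 1 else 0)) =
        if a = b then ∑ j : Fin n, F a j else 0 := by
    intro F a b
    simp_rw [← Finset.sum_mul]
    simp only [mul_ite, mul_one, mul_zero, ite_mul, one_mul, zero_mul]
    rw [Finset.sum_ite_eq]
    by_cases h : a = b <;> simp [h]
  have key4 : ∀ (F : Matrix (Fin n) (Fin n) ℝ) (a b : Fin n),
      ∑ i : Fin n, ∑ j : Fin n,
        F i j * ((if a = j then (1:ℝ) else 0) * (if b = j then 1 else 0)) =
        if a = b then ∑ i : Fin n, F i a else 0 := by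
    intro F a b
    rw [Finset.sum_comm]
    simp_rw [← Finset.sum_mul]
    simp only [mul_ite, mul_one, mul_zero, ite_mul, one_mul, zero_mul]
    rw [Finset.sum_ite_eq]
    by_cases h : a = b <;> simp [h]
  have hsq2 : ∀ i j, Real.sqrt (A i j / 2) * Real.sqrt (A i j / 2) = A i j / 2 := fun i j =>
    Real.mul_self_sqrt (by linarith [hnn i j])
  have hsplit : ∀ (a : Fin n) (g : Fin n → ℝ),
      ∑ x : Fin n, (if a = x then 0 else g x) = ∑ x ∈ Finset.univ.erase a, g x := by
    intro a g
    rw [← Finset.add_sum_erase Finset.univ _ (Finset.mem_univ a), if_pos rfl, zero_add]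
    exact Finset.sum_congr rfl fun x hx => if_neg (Ne.symm (Finset.ne_of_mem_erase hx))
  have key : ∀ p q, A p q = ∑ k : (Fin n × Fin n) ⊕ Fin n, C k p * C k q := by
    intro p q
    rw [Fintype.sum_sum_type]
    have h2 : ∑ i : Fin n, C (Sum.inr i) p * C (Sum.inr i) q
        = if p = q then d p else 0 := by
      simp only [hC_def]
      simp only [ite_mul, mul_ite, zero_mul, mul_zero]
      rw [Finset.sum_ite_eq]
      by_cases h : p = q <;> simp [h, Real.mul_self_sqrt (hd q)]
    set F : Matrix (Fin n) (Fin n) ℝ := fun i j => if i = j then 0 else A i j / 2 with hF_def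
    have hterm : ∀ i j : Fin n,
        C (Sum.inl (i, j)) p * C (Sum.inl (i, j)) q
        = F i j * ((if p = i then (1:ℝ) else 0) * (if q = i then 1 else 0))
          + F i j * ((if p = i then (1:ℝ) else 0) * (if q = j then 1 else 0))
          + F i j * ((if p = j then (1:ℝ) else 0) * (if q = i then 1 else 0))
          + F i j * ((if p = j then (1:ℝ) else 0) * (if q = j then 1 else 0)) := by
      intro i j
      simp only [hC_def, hF_def]
      by_cases h : i = j
      · simp [h]
      · rw [if_neg h, if_neg h, if_neg h,
          show ∀ s a b : ℝ, (s * a) * (s * b) = (s * s) * (a * b) from fun s a b => by ring,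
          hsq2]
        ring
    have h1 : ∑ x : Fin n × Fin n, C (Sum.inl x) p * C (Sum.inl x) q
        = if p = q then ∑ j ∈ Finset.univ.erase p, A p j else A p q := by
      rw [Fintype.sum_prod_type]
      simp_rw [hterm, Finset.sum_add_distrib]
      rw [key1 F p q, key2 F p q, key3 F p q, key4 F p q]
      by_cases h : p = q
      · subst h
        have e1 : ∑ j : Fin n, F p j = ∑ j ∈ Finset.univ.erase p, A p j / 2 := by
          rw [hF_def]; exact hsplit p _
        have e2 : ∑ i : Fin n, F i p = ∑ j ∈ Finset.univ.erase p, A p j / 2 := by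
          rw [hF_def]
          have : ∀ i : Fin n, (if i = p then (0:ℝ) else A i p / 2)
              = if p = i then 0 else A p i / 2 := by
            intro i
            by_cases hip : i = p
            · simp [hip]
            · rw [if_neg hip, if_neg (Ne.symm hip), hsym']
          simp_rw [this]
          exact hsplit p _
        rw [if_pos rfl, if_pos rfl, if_pos rfl, e1, e2]
        simp only [hF_def, if_pos rfl, if_true, add_zero, zero_add]
        rw [← Finset.sum_add_distrib]
        exact Finset.sum_congr rfl fun x _ => add_halves _
      · rw [if_neg h, if_neg h, if_neg h, hF_def]
        simp only
        rw [if_neg h, if_neg (fun hqp : q = p => h hqp.symm), hsym' p q]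
        ring
    rw [h1, h2]
    by_cases h : p = q
    · subst h; simp [hd_def]
    · simp [h]
  refine ⟨Fintype.card ((Fin n × Fin n) ⊕ Fin n),
    C.submatrix (Fintype.equivFin _).symm id, fun i j => hCnn _ _, ?_⟩
  ext p q
  rw [Matrix.mul_apply]
  simp only [Matrix.transpose_apply, Matrix.submatrix_apply, id]
  rw [key p q, ← Equiv.sum_comp (Fintype.equivFin ((Fin n × Fin n) ⊕ Fin n)).symm
    (fun x => C x p * C x q)]
end
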